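/- arXiv:2407.11247 — 2 statements merged into one kernel-verified Lean document; each statement's English description precedes it below -/
import Mathlib

section
/- Let s ∈ ℝ and let b, h be unit quaternions with re(b) = 0 and re(h) = 0. Set a = i, f = i, p = exp(s·im(b*h)), q = exp(s·h), and define c = q⁻¹ * p⁻¹ * b * p * q and d = q⁻¹ * p⁻¹ * b⁻¹ * p * b * a * f⁻¹ * q * f. Then: (1) re(c⁻¹ * d) = re(b⁻¹ * q * i * q⁻¹); (2) re(f⁻¹ * d) = re(p⁻¹ * p⁻¹); (3) re(d⁻¹ * c⁻¹ * d * f) = re(b⁻¹ * p⁻¹ * p⁻¹ * q * i * q⁻¹). (Lemma 5.4 of the paper: for a representation with ρ(f) = ρ(a) = i, the coordinates of π₀ ∘ U_s are the characters (re(b̄ q i q̄), re(p̄²), re(b̄ p̄² q i q̄)).) -/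
open Quaternion

/-- The imaginary unit `i` of the quaternions. -/
noncomputable def qi : ℍ[ℝ] := ⟨0, 1, 0, 0⟩

lemma re_cyc (x y : ℍ[ℝ]) : (x * y).re = (y * x).re := by
  simp [Quaternion.re_mul]; ring

/-- Lemma 5.4 of the paper: for a representation with `ρ(f) = ρ(a) = i`, the coordinates of
`π₀ ∘ U_s` are given by the characters `(re(b̄ q i q̄), re(p̄²), re(b̄ p̄² q i q̄))`, where
`c = q̄ p̄ b p q` and `d = q̄ p̄ b̄ p b a f̄ q f`. -/
theorem characters_after_involution (s : ℝ) (b h : ℍ[ℝ])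
    (hb : ‖b‖ = 1) (hh : ‖h‖ = 1) (hbre : b.re = 0) (hhre : h.re = 0)
    (a f p q c d : ℍ[ℝ])
    (ha : a = qi) (hf : f = qi)
    (hp : p = NormedSpace.exp (s • Quaternion.im (b * h)))
    (hq : q = NormedSpace.exp (s • h))
    (hc : c = q⁻¹ * p⁻¹ * b * p * q)
    (hd : d = q⁻¹ * p⁻¹ * b⁻¹ * p * b * a * f⁻¹ * q * f) :
    (c⁻¹ * d).re = (b⁻¹ * q * qi * q⁻¹).re ∧
    (f⁻¹ * d).re = (p⁻¹ * p⁻¹).re ∧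
    (d⁻¹ * c⁻¹ * d * f).re = (b⁻¹ * p⁻¹ * p⁻¹ * q * qi * q⁻¹).re := by
  have hsb : star b = -b := Quaternion.star_eq_neg.2 hbre
  have hsh : star h = -h := Quaternion.star_eq_neg.2 hhre
  have hns : Quaternion.normSq b = 1 := by
    rw [Quaternion.normSq_eq_norm_mul_self, hb]; norm_num
  have hb2 : b * b = -1 := by
    have h1 := Quaternion.self_mul_star b
    rw [hsb, hns] at h1
    have h2 : -(b*b) = 1 := by rw [← mul_neg, h1]; norm_num
    rw [← h2, neg_neg]
  have hbne : b ≠ 0 := by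
    intro h0; rw [h0] at hb; simp at hb
  have hbinv : b⁻¹ = -b := by
    refine inv_eq_of_mul_eq_one_right ?_
    rw [mul_neg, hb2, neg_neg]
  set v : ℍ[ℝ] := s • Quaternion.im (b * h) with hvdef
  have him : Quaternion.im (b * h) = b * h - ((b*h).re : ℍ[ℝ]) :=
    eq_sub_of_add_eq' (Quaternion.re_add_im _)
  have hhb : h * b = 2 * (((b*h).re : ℝ) : ℍ[ℝ]) - b * h := by
    have h1 := Quaternion.self_add_star (b*h)
    rw [star_mul, hsb, hsh, neg_mul_neg] at h1
    exact eq_sub_of_add_eq' h1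
  have hc' : b * (((b*h).re : ℝ) : ℍ[ℝ]) * b = (((b*h).re : ℝ) : ℍ[ℝ]) * (b*b) := by
    rw [show b * (((b*h).re : ℝ) : ℍ[ℝ]) = (((b*h).re : ℝ) : ℍ[ℝ]) * b from
      (Quaternion.coe_commutes _ _).symm, mul_assoc]
  have hbvb : b * v * b = v := by
    rw [hvdef, him, Algebra.mul_smul_comm, Algebra.smul_mul_assoc]
    congr 1
    calc b * (b * h - (((b*h).re : ℝ) : ℍ[ℝ])) * b
        = (b*b) * (h*b) - b * (((b*h).re : ℝ) : ℍ[ℝ]) * b := by noncomm_ring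
      _ = (b*b) * (h*b) - (((b*h).re : ℝ) : ℍ[ℝ]) * (b*b) := by rw [hc']
      _ = b * h - (((b*h).re : ℝ) : ℍ[ℝ]) := by rw [hb2, hhb]; noncomm_ring
  -- exp facts
  letI : NormedAlgebra ℚ ℍ[ℝ] := .restrictScalars ℚ ℝ ℍ[ℝ]
  have hpne : p ≠ 0 := by rw [hp]; exact (NormedSpace.isUnit_exp _).ne_zero
  have hqne : q ≠ 0 := by rw [hq]; exact (NormedSpace.isUnit_exp _).ne_zero
  have hpinv : p⁻¹ = NormedSpace.exp (-v) := by rw [hp, NormedSpace.exp_neg]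
  have hbvb' : b * v * b⁻¹ = -v := by rw [hbinv, mul_neg, hbvb]
  have hconj : b * p * b⁻¹ = p⁻¹ := by
    rw [hp, ← NormedSpace.exp_neg, ← hbvb']
    exact (NormedSpace.exp_conj _ _ hbne).symm
  have hbp : b * p = p⁻¹ * b := by
    rw [← hconj, mul_assoc, inv_mul_cancel₀ hbne, mul_one]
  have hpb : p * b = b * p⁻¹ := by
    have h2 : p * (b * p) * p⁻¹ = p * (p⁻¹ * b) * p⁻¹ := by rw [hbp]
    simp only [← mul_assoc, mul_inv_cancel_right₀ hpne, mul_inv_cancel₀ hpne, one_mul] at h2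
    exact h2
  -- qi facts
  have hqi2 : qi * qi = -1 := by
    ext <;> simp [Quaternion.re_mul, Quaternion.imI_mul, Quaternion.imJ_mul, Quaternion.imK_mul] <;> simp [qi]
  have hqine : qi ≠ 0 := by
    intro h0
    have := congrArg QuaternionAlgebra.imI h0
    simp [qi] at this
  have hqiinv : qi⁻¹ = -qi := by
    refine inv_eq_of_mul_eq_one_right ?_
    rw [mul_neg, hqi2, neg_neg]
  -- cancellation helpers
  have cq : ∀ x : ℍ[ℝ], q⁻¹ * (q * x) = x := fun x => inv_mul_cancel_left₀ hqne x
  have cq' : ∀ x : ℍ[ℝ], q * (q⁻¹ * x) = x := fun x => mul_inv_cancel_left₀ hqne x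
  have cp : ∀ x : ℍ[ℝ], p⁻¹ * (p * x) = x := fun x => inv_mul_cancel_left₀ hpne x
  have cp' : ∀ x : ℍ[ℝ], p * (p⁻¹ * x) = x := fun x => mul_inv_cancel_left₀ hpne x
  have hbbx : ∀ x : ℍ[ℝ], b * (b * x) = -x := fun x => by
    rw [← mul_assoc, hb2, neg_one_mul]
  have hqiqix : ∀ x : ℍ[ℝ], qi * (qi * x) = -x := fun x => by
    rw [← mul_assoc, hqi2, neg_one_mul]
  have hpbx : ∀ x : ℍ[ℝ], p * (b * x) = b * (p⁻¹ * x) := fun x => by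
    rw [← mul_assoc, hpb, mul_assoc]
  have hp'bx : ∀ x : ℍ[ℝ], p⁻¹ * (b * x) = b * (p * x) := fun x => by
    rw [← mul_assoc, ← hbp, mul_assoc]
  subst ha hf hc hd
  refine ⟨?_, ?_, ?_⟩
  · simp only [mul_inv_rev, inv_inv, hbinv, hqiinv, mul_neg, neg_mul, neg_neg,
      mul_assoc, cq, cq', cp, cp', hbbx, hqiqix, hpbx, hp'bx, hqi2, hb2, mul_one, one_mul]
    simp only [Quaternion.re_neg, neg_inj]
    rw [re_cyc q⁻¹]
    simp only [mul_assoc]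
  · simp only [mul_inv_rev, inv_inv, hbinv, hqiinv, mul_neg, neg_mul, neg_neg,
      mul_assoc, cq, cq', cp, cp', hbbx, hqiqix, hpbx, hp'bx, hqi2, hb2, mul_one, one_mul]
    simp only [Quaternion.re_neg]
    rw [re_cyc qi]
    simp only [mul_assoc, hqi2, mul_neg, mul_one, Quaternion.re_neg, neg_neg]
    rw [re_cyc q⁻¹]
    simp only [mul_assoc, mul_inv_cancel₀ hqne, mul_one]
  · simp only [mul_inv_rev, inv_inv, hbinv, hqiinv, mul_neg, neg_mul, neg_neg,
      mul_assoc, cq, cq', cp, cp', hbbx, hqiqix, hpbx, hp'bx, hqi2, hb2, mul_one, one_mul]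
    simp only [Quaternion.re_neg, neg_inj]
    rw [re_cyc qi]
    simp only [mul_assoc]
    rw [re_cyc q⁻¹]
    simp only [mul_assoc]
end

section
/- Let s, σ, η ∈ ℝ. Set u = cos σ·k − sin σ·j, h₀ = cos σ·j + sin σ·k, h = exp(η·u) * h₀ * exp(−η·u), q = exp(s·h), p = exp(s·h) * exp((−2η)·u) * exp(−s·h), and b = exp(s·h) * exp((−σ)·u) * i * exp(−s·h) (the earring parameterization of K_s from Lemma 7.3). Then: (1) re(b⁻¹ * q * i * q⁻¹) = cos σ; (2) re(p⁻¹ * p⁻¹) = cos(4η); (3) re(b⁻¹ * p⁻¹ * p⁻¹ * q * i * q⁻¹) = cos(σ + 4η). In particular, if 2η = −s·cos(σ + 2η), then re(p⁻¹ * p⁻¹) = cos(2s·cos(σ + 2η)). (The character computations in the proof of Proposition 7.6 of the paper for the earring tangle.) -/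
open Quaternion

/-- The imaginary unit `j` of the quaternions. -/
noncomputable def qj : ℍ[ℝ] := ⟨0, 0, 1, 0⟩
/-- The imaginary unit `k` of the quaternions. -/
noncomputable def qk : ℍ[ℝ] := ⟨0, 0, 0, 1⟩

lemma qi_re : qi.re = 0 := rfl
lemma qi_imI : qi.imI = 1 := rfl
lemma qi_imJ : qi.imJ = 0 := rfl
lemma qi_imK : qi.imK = 0 := rfl
lemma qj_re : qj.re = 0 := rfl
lemma qj_imI : qj.imI = 0 := rfl
lemma qj_imJ : qj.imJ = 1 := rfl
lemma qj_imK : qj.imK = 0 := rfl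
lemma qk_re : qk.re = 0 := rfl
lemma qk_imI : qk.imI = 0 := rfl
lemma qk_imJ : qk.imJ = 0 := rfl
lemma qk_imK : qk.imK = 1 := rfl

/-- The exponential of a real multiple of a purely imaginary unit quaternion. -/
lemma exp_smul_unit (t : ℝ) (u : ℍ[ℝ]) (hre : u.re = 0) (hnorm : ‖u‖ = 1) :
    NormedSpace.exp (t • u) = (Real.cos t : ℍ[ℝ]) + Real.sin t • u := by
  rw [Quaternion.exp_of_re_eq_zero (t • u) (by simp [hre])]
  rw [norm_smul, hnorm, mul_one, smul_smul]
  congr 1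
  · norm_cast
    rw [Real.norm_eq_abs, Real.cos_abs]
  · congr 1
    rcases lt_trichotomy t 0 with h | h | h
    · rw [Real.norm_eq_abs, abs_of_neg h, Real.sin_neg, neg_div_neg_eq,
        div_mul_eq_mul_div, mul_div_cancel_right₀ _ h.ne]
    · simp [h]
    · rw [Real.norm_eq_abs, abs_of_pos h, div_mul_eq_mul_div,
        mul_div_cancel_right₀ _ h.ne']

lemma re_mul_comm (a b : ℍ[ℝ]) : (a * b).re = (b * a).re := by
  simp only [Quaternion.re_mul]; ring

/-- The character computations in the proof of Proposition 7.6 of the paper for the earring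
tangle: along the parameterization of `K_s`, the three pillowcase characters are
`(cos σ, cos(4η), cos(σ + 4η))`; in particular, if `2η = −s·cos(σ + 2η)`, then
`re(p̄²) = cos(2s·cos(σ + 2η))`. -/
theorem earring_character_computation (s σ η : ℝ)
    (u h₀ h q p b : ℍ[ℝ])
    (hu : u = Real.cos σ • qk - Real.sin σ • qj)
    (hh₀ : h₀ = Real.cos σ • qj + Real.sin σ • qk)
    (hh : h = NormedSpace.exp (η • u) * h₀ * NormedSpace.exp ((-η) • u))
    (hq : q = NormedSpace.exp (s • h))
    (hp : p = NormedSpace.exp (s • h) * NormedSpace.exp ((-(2 * η)) • u) *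
      NormedSpace.exp ((-s) • h))
    (hb : b = NormedSpace.exp (s • h) * NormedSpace.exp ((-σ) • u) * qi *
      NormedSpace.exp ((-s) • h)) :
    (b⁻¹ * q * qi * q⁻¹).re = Real.cos σ ∧
    (p⁻¹ * p⁻¹).re = Real.cos (4 * η) ∧
    (b⁻¹ * p⁻¹ * p⁻¹ * q * qi * q⁻¹).re = Real.cos (σ + 4 * η) ∧
    (2 * η = -s * Real.cos (σ + 2 * η) →
      (p⁻¹ * p⁻¹).re = Real.cos (2 * s * Real.cos (σ + 2 * η))) := by
  have hre : u.re = 0 := by simp [hu, qj_re, qj_imI, qj_imJ, qj_imK, qk_re, qk_imI, qk_imJ, qk_imK]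
  have hnorm : ‖u‖ = 1 := by
    have h1 : ‖u‖ * ‖u‖ = 1 := by
      rw [← Quaternion.normSq_eq_norm_mul_self]
      simp [hu, qj_re, qj_imI, qj_imJ, qj_imK, qk_re, qk_imI, qk_imJ, qk_imK, Quaternion.normSq_def']
    nlinarith [norm_nonneg u]
  haveI : CharZero ℍ[ℝ] := charZero_of_injective_algebraMap (algebraMap ℝ ℍ[ℝ]).injective
  have hEne : NormedSpace.exp (s • h) ≠ 0 := (NormedSpace.isUnit_exp (s • h)).ne_zero
  have hEinv : NormedSpace.exp ((-s) • h) = (NormedSpace.exp (s • h))⁻¹ := by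
    rw [neg_smul, NormedSpace.exp_neg]
  have hinv : ∀ t : ℝ, (NormedSpace.exp (t • u))⁻¹ = NormedSpace.exp ((-t) • u) := by
    intro t; rw [neg_smul, NormedSpace.exp_neg]
  have hqi_inv : (qi)⁻¹ = -qi := inv_eq_of_mul_eq_one_right (by ext <;> simp [qi_re, qi_imI, qi_imJ, qi_imK, Quaternion.re_mul, Quaternion.imI_mul, Quaternion.imJ_mul, Quaternion.imK_mul])
  have h1 : (b⁻¹ * q * qi * q⁻¹).re = Real.cos σ := by
    rw [hb, hq, hEinv, re_mul_comm]
    simp only [mul_inv_rev, inv_inv, hqi_inv, hinv, neg_neg, mul_assoc,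
      inv_mul_cancel_left₀ hEne, inv_mul_cancel₀ hEne, mul_one]
    rw [exp_smul_unit σ u hre hnorm, hu]
    simp [qi_re, qi_imI, qi_imJ, qi_imK, qj_re, qj_imI, qj_imJ, qj_imK, qk_re, qk_imI, qk_imJ, qk_imK, Quaternion.re_mul, Quaternion.imI_mul, Quaternion.imJ_mul, Quaternion.imK_mul]
  have h2 : (p⁻¹ * p⁻¹).re = Real.cos (4 * η) := by
    rw [hp, hEinv]
    simp only [mul_inv_rev, inv_inv, hinv, neg_neg, mul_assoc,
      inv_mul_cancel_left₀ hEne]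
    rw [re_mul_comm]
    simp only [mul_assoc, inv_mul_cancel₀ hEne, mul_one]
    rw [exp_smul_unit (2 * η) u hre hnorm, hu]
    rw [show (4 : ℝ) * η = 2 * η + 2 * η by ring, Real.cos_add]
    simp [qi_re, qi_imI, qi_imJ, qi_imK, qj_re, qj_imI, qj_imJ, qj_imK, qk_re, qk_imI, qk_imJ, qk_imK, Quaternion.re_mul, Quaternion.imI_mul, Quaternion.imJ_mul, Quaternion.imK_mul]
    linear_combination (-(Real.sin (2 * η) * Real.sin (2 * η))) * Real.sin_sq_add_cos_sq σ
  refine ⟨h1, h2, ?_, ?_⟩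
  · rw [hb, hp, hq, hEinv, re_mul_comm]
    simp only [mul_inv_rev, inv_inv, hqi_inv, hinv, neg_neg, mul_assoc,
      inv_mul_cancel_left₀ hEne, inv_mul_cancel₀ hEne, mul_one]
    rw [exp_smul_unit σ u hre hnorm, exp_smul_unit (2 * η) u hre hnorm, hu]
    rw [show σ + 4 * η = σ + 2 * η + 2 * η by ring, Real.cos_add, Real.cos_add, Real.sin_add]
    simp [qi_re, qi_imI, qi_imJ, qi_imK, qj_re, qj_imI, qj_imJ, qj_imK, qk_re, qk_imI, qk_imJ, qk_imK, Quaternion.re_mul, Quaternion.imI_mul, Quaternion.imJ_mul, Quaternion.imK_mul]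
    linear_combination (-(Real.cos σ * Real.sin (2 * η) ^ 2) -
      2 * Real.cos (2 * η) * Real.sin (2 * η) * Real.sin σ) * Real.sin_sq_add_cos_sq σ
  · intro hcrit
    have h4 : (4 : ℝ) * η = -(2 * s * Real.cos (σ + 2 * η)) := by linarith
    rw [h2, h4, Real.cos_neg]
end
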